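/- For all x in (0, π/2), sin(x) · sinh(x)² > x³. -/

import Mathlib

open Real

lemma aux_cosh (x : ℝ) (hx : 0 ≤ x) : 1 + x ^ 2 / 2 ≤ Real.cosh x := by
  have hd : ∀ y : ℝ, HasDerivAt (fun y : ℝ => Real.cosh y - y ^ 2 / 2)
      (Real.sinh y - y) y := by
    intro y
    have h2 : HasDerivAt (fun y : ℝ => y ^ 2 / 2) y y := by
      have := (hasDerivAt_pow 2 y).div_const 2
      norm_num at this
      simpa using this
    exact (Real.hasDerivAt_cosh y).sub h2
  have h : MonotoneOn (fun y : ℝ => Real.cosh y - y ^ 2 / 2) (Set.Ici 0) := by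
    apply monotoneOn_of_deriv_nonneg (convex_Ici 0)
      (fun y _ => (hd y).differentiableAt.continuousAt.continuousWithinAt)
      (fun y _ => (hd y).differentiableAt.differentiableWithinAt)
    intro y hy
    rw [interior_Ici, Set.mem_Ioi] at hy
    rw [(hd y).deriv]
    have := Real.self_le_sinh_iff.2 hy.le
    linarith
  have := h Set.self_mem_Ici (Set.mem_Ici.2 hx) hx
  simp only [Real.cosh_zero] at this
  norm_num at this
  linarith

lemma aux_sinh (x : ℝ) (hx : 0 ≤ x) : x + x ^ 3 / 6 ≤ Real.sinh x := by
  have hd : ∀ y : ℝ, HasDerivAt (fun y : ℝ => Real.sinh y - y - y ^ 3 / 6)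
      (Real.cosh y - 1 - y ^ 2 / 2) y := by
    intro y
    have h2 : HasDerivAt (fun y : ℝ => y ^ 3 / 6) (y ^ 2 / 2) y := by
      have := (hasDerivAt_pow 3 y).div_const 6
      norm_num at this
      refine this.congr_deriv ?_
      ring
    exact ((Real.hasDerivAt_sinh y).sub (hasDerivAt_id y)).sub h2
  have h : MonotoneOn (fun y : ℝ => Real.sinh y - y - y ^ 3 / 6) (Set.Ici 0) := by
    apply monotoneOn_of_deriv_nonneg (convex_Ici 0)
      (fun y _ => (hd y).differentiableAt.continuousAt.continuousWithinAt)
      (fun y _ => (hd y).differentiableAt.differentiableWithinAt)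
    intro y hy
    rw [interior_Ici, Set.mem_Ioi] at hy
    rw [(hd y).deriv]
    have := aux_cosh y hy.le
    linarith
  have := h Set.self_mem_Ici (Set.mem_Ici.2 hx) hx
  simp only [Real.sinh_zero] at this
  norm_num at this
  linarith

lemma aux_sin (x : ℝ) (hx : 0 ≤ x) : x - x ^ 3 / 6 ≤ Real.sin x := by
  have hd : ∀ y : ℝ, HasDerivAt (fun y : ℝ => Real.sin y - y + y ^ 3 / 6)
      (Real.cos y - 1 + y ^ 2 / 2) y := by
    intro y
    have h2 : HasDerivAt (fun y : ℝ => y ^ 3 / 6) (y ^ 2 / 2) y := by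
      have := (hasDerivAt_pow 3 y).div_const 6
      norm_num at this
      refine this.congr_deriv ?_
      ring
    exact ((Real.hasDerivAt_sin y).sub (hasDerivAt_id y)).add h2
  have h : MonotoneOn (fun y : ℝ => Real.sin y - y + y ^ 3 / 6) (Set.Ici 0) := by
    apply monotoneOn_of_deriv_nonneg (convex_Ici 0)
      (fun y _ => (hd y).differentiableAt.continuousAt.continuousWithinAt)
      (fun y _ => (hd y).differentiableAt.differentiableWithinAt)
    intro y hy
    rw [interior_Ici, Set.mem_Ioi] at hy
    rw [(hd y).deriv]
    have := Real.one_sub_sq_div_two_le_cos (x := y)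
    linarith
  have := h Set.self_mem_Ici (Set.mem_Ici.2 hx) hx
  simp only [Real.sin_zero] at this
  norm_num at this
  linarith

theorem stmt_2 (x : ℝ) (hx : x ∈ Set.Ioo 0 (Real.pi / 2)) :
    Real.sin x * Real.sinh x ^ 2 > x ^ 3 := by
  obtain ⟨hx0, hx1⟩ := hx
  have hpi : x < 1.575 := by
    have := Real.pi_lt_d2
    linarith
  have hsin := aux_sin x hx0.le
  have hsinh := aux_sinh x hx0.le
  have h2 : x ^ 2 < 2.480625 := by nlinarith
  have h4 : x ^ 4 < 2.480625 * x ^ 2 := by nlinarith [pow_pos hx0 2]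
  have h6 : x ^ 6 < 2.480625 * x ^ 4 := by nlinarith [pow_pos hx0 4]
  have hkey : x ^ 4 / 6 + x ^ 6 / 36 < x ^ 2 := by nlinarith [pow_pos hx0 2]
  have hsin0 : 0 < x - x ^ 3 / 6 := by nlinarith [mul_lt_mul_of_pos_left h2 hx0]
  have hsinh2 : (x + x ^ 3 / 6) ^ 2 ≤ Real.sinh x ^ 2 :=
    pow_le_pow_left₀ (by positivity) hsinh 2
  have hprod : (x - x ^ 3 / 6) * (x + x ^ 3 / 6) ^ 2 ≤ Real.sin x * Real.sinh x ^ 2 :=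
    mul_le_mul hsin hsinh2 (by positivity) (hsin0.le.trans hsin)
  have hexp : (x - x ^ 3 / 6) * (x + x ^ 3 / 6) ^ 2
      = x ^ 3 + (x ^ 3 / 6) * (x ^ 2 - (x ^ 4 / 6 + x ^ 6 / 36)) := by ring
  have hpos : 0 < (x ^ 3 / 6) * (x ^ 2 - (x ^ 4 / 6 + x ^ 6 / 36)) := by
    apply mul_pos (by positivity)
    linarith
  linarith [hprod, hexp.symm.le]
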